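/- Let λ = (λ_1,…,λ_n) ∈ ℤ^n be dominant and σ a permutation of {1,…,n}; set γ = (γ_1,…,γ_n) with γ_j = λ_{σ^{-1}(j)}. Define H(γ) = (h_{i,j})_{1≤i≤j≤n} by letting (h_{1,j},…,h_{j,j}) be the decreasing rearrangement of (γ_1,…,γ_j) for each j. Then H(γ) is a Gel'fand–Tsetlin pattern of type λ with weight γ^{H(γ)} = γ, and it is the UNIQUE Gel'fand–Tsetlin pattern of type λ whose weight equals γ. -/

import Mathlib

/-- `λ` is dominant: `λ_1 ≥ λ_2 ≥ … ≥ λ_n` (1-indexed). -/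
def IsDominant (n : ℕ) (lam : ℕ → ℤ) : Prop :=
  ∀ i : ℕ, 1 ≤ i → i < n → lam (i + 1) ≤ lam i

/-- `M = (m_{i,j})_{1 ≤ i ≤ j ≤ n}` is a Gel'fand–Tsetlin pattern of type `λ`:
the top row is `λ` and the rows interlace:  `m_{i,j+1} ≥ m_{i,j} ≥ m_{i+1,j+1}`. -/
def IsGTPattern (n : ℕ) (lam : ℕ → ℤ) (m : ℕ → ℕ → ℤ) : Prop :=
  (∀ i : ℕ, 1 ≤ i → i ≤ n → m i n = lam i) ∧
  (∀ i j : ℕ, 1 ≤ i → i ≤ j → j + 1 ≤ n → m i j ≤ m i (j + 1) ∧ m (i + 1) (j + 1) ≤ m i j)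

/-- The `j`-th component of the weight `γ^M` of a triangular array. -/
def gtWeight (m : ℕ → ℕ → ℤ) (j : ℕ) : ℤ :=
  (∑ i ∈ Finset.Icc 1 j, m i j) - ∑ i ∈ Finset.Icc 1 (j - 1), m i (j - 1)

/-- `q(M) = Σ_{1 ≤ i ≤ j ≤ n-1} m_{i,j}`. -/
def gtQ (n : ℕ) (m : ℕ → ℕ → ℤ) : ℤ :=
  ∑ j ∈ Finset.Icc 1 (n - 1), ∑ i ∈ Finset.Icc 1 j, m i j

/-- The dual triangular array `M^∨`, with `m^∨_{i,j} = -m_{j+1-i,j}`. -/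
def gtDual (m : ℕ → ℕ → ℤ) : ℕ → ℕ → ℤ := fun i j => - m (j + 1 - i) j

/-- Factorial of an integer (arguments are nonnegative in all uses). -/
def ifact (a : ℤ) : ℚ := (Nat.factorial a.toNat : ℚ)

/-- The rational constant `r(M)`. -/
def gtR (n : ℕ) (m : ℕ → ℕ → ℤ) : ℚ :=
  ∏ k ∈ Finset.Icc 1 n, ∏ j ∈ Finset.Icc 1 (k - 1), ∏ i ∈ Finset.Icc 1 j,
    (ifact (m i k - m j (k - 1) - (i : ℤ) + (j : ℤ)) *
        ifact (m i (k - 1) - m (j + 1) k - (i : ℤ) + (j : ℤ))) /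
      (ifact (m i (k - 1) - m j (k - 1) - (i : ℤ) + (j : ℤ)) *
        ifact (m i k - m (j + 1) k - (i : ℤ) + (j : ℤ)))


open Finset

namespace GTaux

/-- number of indices `s ∈ [1,j]` with `γ s ≥ v`. -/
def cnt (γ : ℕ → ℤ) (j : ℕ) (v : ℤ) : ℕ :=
  ((Finset.Icc 1 j).filter (fun s => v ≤ γ s)).card

lemma cnt_mono (γ : ℕ → ℤ) (j : ℕ) {v w : ℤ} (hvw : v ≤ w) : cnt γ j w ≤ cnt γ j v := by
  apply Finset.card_le_card
  intro s hs
  rw [Finset.mem_filter] at hs ⊢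
  exact ⟨hs.1, hvw.trans hs.2⟩

lemma cnt_le (γ : ℕ → ℤ) (j : ℕ) (v : ℤ) : cnt γ j v ≤ j := by
  have := Finset.card_le_card (Finset.filter_subset (fun s => v ≤ γ s) (Finset.Icc 1 j))
  simpa [cnt, Nat.card_Icc] using this

lemma cnt_succ (γ : ℕ → ℤ) (j : ℕ) (v : ℤ) :
    cnt γ (j + 1) v = cnt γ j v + (if v ≤ γ (j + 1) then 1 else 0) := by
  unfold cnt
  have h1 : Finset.Icc 1 (j + 1) = insert (j + 1) (Finset.Icc 1 j) := by
    ext s; simp [Finset.mem_Icc, Finset.mem_insert]; omega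
  rw [h1, Finset.filter_insert]
  by_cases hv : v ≤ γ (j + 1)
  · rw [if_pos hv, if_pos hv, Finset.card_insert_of_notMem]
    simp [Finset.mem_Icc]
  · rw [if_neg hv, if_neg hv]; simp

lemma mem_iff_le_card {S : Finset ℕ} {j : ℕ} (hS : S ⊆ Finset.Icc 1 j)
    (hcl : ∀ s ∈ S, ∀ r, 1 ≤ r → r ≤ s → r ∈ S) :
    ∀ i, 1 ≤ i → (i ∈ S ↔ i ≤ S.card) := by
  intro i hi
  constructor
  · intro hiS
    have h1 : Finset.Icc 1 i ⊆ S := by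
      intro r hr
      rw [Finset.mem_Icc] at hr
      exact hcl i hiS r hr.1 hr.2
    have := Finset.card_le_card h1
    rw [Nat.card_Icc] at this
    omega
  · intro hle
    by_contra hiS
    have h2 : S ⊆ Finset.Icc 1 (i - 1) := by
      intro s hs
      have h3 := hS hs
      rw [Finset.mem_Icc] at h3 ⊢
      refine ⟨h3.1, ?_⟩
      by_contra hlt
      exact hiS (hcl s hs i hi (by omega))
    have := Finset.card_le_card h2
    rw [Nat.card_Icc] at this
    omega

/-- counting characterization of an antitone sequence whose value multiset on `[1,N]`
matches that of `γ`. -/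
lemma row_char (γ f : ℕ → ℤ) (N : ℕ)
    (hmap : (Finset.Icc 1 N).val.map f = (Finset.Icc 1 N).val.map γ)
    (hadj : ∀ i, 1 ≤ i → i < N → f (i + 1) ≤ f i) :
    ∀ i, 1 ≤ i → i ≤ N → ∀ v, (v ≤ f i ↔ i ≤ cnt γ N v) := by
  have hanti : ∀ a b, 1 ≤ a → a ≤ b → b ≤ N → f b ≤ f a := by
    intro a b ha hab hbN
    induction b with
    | zero => omega
    | succ b ih =>
      rcases Nat.eq_or_lt_of_le hab with hE | hL
      · subst hE; exact le_refl _
      · exact (hadj b (by omega) (by omega)).trans (ih (by omega) (by omega))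
  intro i hi1 hiN v
  have hcard : ∀ g : ℕ → ℤ, ((Finset.Icc 1 N).filter (fun s => v ≤ g s)).card
      = Multiset.countP (fun x => v ≤ x) ((Finset.Icc 1 N).val.map g) := by
    intro g
    rw [Multiset.countP_map]
    rfl
  have hcnt : ((Finset.Icc 1 N).filter (fun s => v ≤ f s)).card = cnt γ N v := by
    unfold cnt
    rw [hcard f, hcard γ, hmap]
  rw [← hcnt]
  set S := (Finset.Icc 1 N).filter (fun s => v ≤ f s) with hSdef
  have hS : S ⊆ Finset.Icc 1 N := Finset.filter_subset _ _
  have hcl : ∀ s ∈ S, ∀ r, 1 ≤ r → r ≤ s → r ∈ S := by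
    intro s hs r hr1 hrs
    rw [hSdef, Finset.mem_filter, Finset.mem_Icc] at hs ⊢
    exact ⟨⟨hr1, hrs.trans hs.1.2⟩, hs.2.trans (hanti r s hr1 hrs hs.1.2)⟩
  have hmem := mem_iff_le_card hS hcl i hi1
  rw [← hmem, hSdef, Finset.mem_filter, Finset.mem_Icc]
  constructor
  · intro hv; exact ⟨⟨hi1, hiN⟩, hv⟩
  · intro hv; exact hv.2

/-- Insertion structure: row `g` (length `j+1`) is row `f` (length `j`) with `γ (j+1)`
inserted at position `k`. -/
lemma key (γ f g : ℕ → ℤ) (j : ℕ)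
    (hf : ∀ i, 1 ≤ i → i ≤ j → ∀ v, (v ≤ f i ↔ i ≤ cnt γ j v))
    (hg : ∀ i, 1 ≤ i → i ≤ j + 1 → ∀ v, (v ≤ g i ↔ i ≤ cnt γ (j + 1) v)) :
    ∃ k, 1 ≤ k ∧ k ≤ j + 1 ∧ (∀ i, 1 ≤ i → i < k → g i = f i) ∧
      g k = γ (j + 1) ∧ (∀ i, k ≤ i → i ≤ j → f i = g (i + 1)) := by
  set c := γ (j + 1) with hc
  refine ⟨cnt γ j c + 1, by omega, by have := cnt_le γ j c; omega, ?_, ?_, ?_⟩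
  · -- below insertion point: g i = f i
    intro i hi1 hik
    have hij : i ≤ j := by have := cnt_le γ j c; omega
    apply le_antisymm
    · -- g i ≤ f i
      have hgi : i ≤ cnt γ (j + 1) (g i) := (hg i hi1 (by omega) (g i)).1 (le_refl _)
      rw [cnt_succ] at hgi
      by_cases hv : g i ≤ c
      · have h1 : cnt γ j c ≤ cnt γ j (g i) := cnt_mono γ j hv
        exact (hf i hi1 hij (g i)).2 (by omega)
      · rw [if_neg hv] at hgi
        exact (hf i hi1 hij (g i)).2 (by omega)
    · -- f i ≤ g i
      have hfi : i ≤ cnt γ j (f i) := (hf i hi1 hij (f i)).1 (le_refl _)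
      have : i ≤ cnt γ (j + 1) (f i) := by
        rw [cnt_succ]; omega
      exact (hg i hi1 (by omega) (f i)).2 this
  · -- g k = c
    apply le_antisymm
    · by_contra hlt
      push_neg at hlt
      have h1 : cnt γ j c + 1 ≤ cnt γ (j + 1) (g (cnt γ j c + 1)) :=
        (hg _ (by omega) (by have := cnt_le γ j c; omega) _).1 (le_refl _)
      rw [cnt_succ, if_neg (by omega)] at h1
      have h2 : cnt γ j (g (cnt γ j c + 1)) ≤ cnt γ j c := cnt_mono γ j hlt.le
      omega
    · apply (hg _ (by omega) (by have := cnt_le γ j c; omega) c).2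
      rw [cnt_succ, if_pos (le_refl c)]
  · -- above insertion point: f i = g (i+1)
    intro i hki hij
    apply le_antisymm
    · -- f i ≤ g (i+1)
      have hfi : i ≤ cnt γ j (f i) := (hf i (by omega) hij (f i)).1 (le_refl _)
      have hvc : f i ≤ c := by
        by_contra hlt
        push_neg at hlt
        have : cnt γ j (f i) ≤ cnt γ j c := cnt_mono γ j hlt.le
        omega
      apply (hg (i + 1) (by omega) (by omega) (f i)).2
      rw [cnt_succ, if_pos hvc]; omega
    · -- g (i+1) ≤ f i
      have h1 : i + 1 ≤ cnt γ (j + 1) (g (i + 1)) :=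
        (hg (i + 1) (by omega) (by omega) _).1 (le_refl _)
      rw [cnt_succ] at h1
      apply (hf i (by omega) hij _).2
      by_cases hv : g (i + 1) ≤ c
      · rw [if_pos hv] at h1; omega
      · rw [if_neg hv] at h1; omega

/-- Partial-sums consequence of `key`. -/
lemma key_sums (γ f g : ℕ → ℤ) (j : ℕ)
    (hf : ∀ i, 1 ≤ i → i ≤ j → ∀ v, (v ≤ f i ↔ i ≤ cnt γ j v))
    (hg : ∀ i, 1 ≤ i → i ≤ j + 1 → ∀ v, (v ≤ g i ↔ i ≤ cnt γ (j + 1) v)) :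
    ∃ k, 1 ≤ k ∧ k ≤ j + 1 ∧
      (∀ t, t < k → ∑ i ∈ Finset.Ioc 0 t, g i = ∑ i ∈ Finset.Ioc 0 t, f i) ∧
      (∀ t, t ≤ j → k ≤ t + 1 →
        ∑ i ∈ Finset.Ioc 0 (t + 1), g i = (∑ i ∈ Finset.Ioc 0 t, f i) + γ (j + 1)) := by
  obtain ⟨k, hk1, hkj, hbelow, hval, habove⟩ := key γ f g j hf hg
  refine ⟨k, hk1, hkj, ?_, ?_⟩
  · intro t ht
    apply Finset.sum_congr rfl
    intro i hi
    rw [Finset.mem_Ioc] at hi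
    exact hbelow i (by omega) (by omega)
  · intro t htj hkt
    have hsplit1 : (∑ i ∈ Finset.Ioc 0 (k - 1), g i) + ∑ i ∈ Finset.Ioc (k - 1) (t + 1), g i
        = ∑ i ∈ Finset.Ioc 0 (t + 1), g i :=
      Finset.sum_Ioc_consecutive _ (by omega) (by omega)
    have hsplit2 : (∑ i ∈ Finset.Ioc 0 (k - 1), f i) + ∑ i ∈ Finset.Ioc (k - 1) t, f i
        = ∑ i ∈ Finset.Ioc 0 t, f i :=
      Finset.sum_Ioc_consecutive _ (by omega) (by omega)
    have hlow : ∑ i ∈ Finset.Ioc 0 (k - 1), g i = ∑ i ∈ Finset.Ioc 0 (k - 1), f i := by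
      apply Finset.sum_congr rfl
      intro i hi
      rw [Finset.mem_Ioc] at hi
      exact hbelow i (by omega) (by omega)
    have hmid : Finset.Ioc (k - 1) (t + 1) = insert k (Finset.Ioc k (t + 1)) := by
      ext s; simp only [Finset.mem_Ioc, Finset.mem_insert]; omega
    have hknot : k ∉ Finset.Ioc k (t + 1) := by simp
    have hshift : Finset.Ioc k (t + 1) = (Finset.Ioc (k - 1) t).map (addRightEmbedding 1) := by
      rw [Finset.map_add_right_Ioc]
      congr 1 <;> omega
    have hhigh : ∑ i ∈ Finset.Ioc k (t + 1), g i = ∑ i ∈ Finset.Ioc (k - 1) t, f i := by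
      rw [hshift, Finset.sum_map]
      apply Finset.sum_congr rfl
      intro i hi
      rw [Finset.mem_Ioc] at hi
      have : addRightEmbedding 1 i = i + 1 := rfl
      rw [this]
      exact (habove i (by omega) (by omega)).symm
    rw [← hsplit1, ← hsplit2, hlow, hmid, Finset.sum_insert hknot, hval, hhigh]
    ring

/-- Step inequality: `T(t,j) + γ(j+1) ≤ T(t+1, j+1)`. -/
lemma m_step (n : ℕ) (γ : ℕ → ℤ) (m : ℕ → ℕ → ℤ)
    (hinter : ∀ i j : ℕ, 1 ≤ i → i ≤ j → j + 1 ≤ n →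
      m i j ≤ m i (j + 1) ∧ m (i + 1) (j + 1) ≤ m i j)
    (t j : ℕ) (ht : t ≤ j) (hj : j + 1 ≤ n)
    (hw : (∑ i ∈ Finset.Ioc 0 (j + 1), m i (j + 1)) - (∑ i ∈ Finset.Ioc 0 j, m i j) = γ (j + 1)) :
    (∑ i ∈ Finset.Ioc 0 t, m i j) + γ (j + 1) ≤ ∑ i ∈ Finset.Ioc 0 (t + 1), m i (j + 1) := by
  have hsplit1 : (∑ i ∈ Finset.Ioc 0 t, m i j) + ∑ i ∈ Finset.Ioc t j, m i j
      = ∑ i ∈ Finset.Ioc 0 j, m i j :=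
    Finset.sum_Ioc_consecutive _ (by omega) (by omega)
  have hsplit2 : (∑ i ∈ Finset.Ioc 0 (t + 1), m i (j + 1))
      + ∑ i ∈ Finset.Ioc (t + 1) (j + 1), m i (j + 1)
      = ∑ i ∈ Finset.Ioc 0 (j + 1), m i (j + 1) :=
    Finset.sum_Ioc_consecutive _ (by omega) (by omega)
  have hshift : Finset.Ioc (t + 1) (j + 1) = (Finset.Ioc t j).map (addRightEmbedding 1) := by
    rw [Finset.map_add_right_Ioc]
  have htail : ∑ i ∈ Finset.Ioc (t + 1) (j + 1), m i (j + 1) ≤ ∑ i ∈ Finset.Ioc t j, m i j := by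
    rw [hshift, Finset.sum_map]
    apply Finset.sum_le_sum
    intro i hi
    rw [Finset.mem_Ioc] at hi
    have : addRightEmbedding 1 i = i + 1 := rfl
    rw [this]
    exact (hinter i j (by omega) hi.2 hj).2
  omega

lemma claim_low (n : ℕ) (γ : ℕ → ℤ) (m : ℕ → ℕ → ℤ)
    (hinter : ∀ i j : ℕ, 1 ≤ i → i ≤ j → j + 1 ≤ n →
      m i j ≤ m i (j + 1) ∧ m (i + 1) (j + 1) ≤ m i j)
    (hw : ∀ j, j + 1 ≤ n →
      (∑ i ∈ Finset.Ioc 0 (j + 1), m i (j + 1)) - (∑ i ∈ Finset.Ioc 0 j, m i j) = γ (j + 1)) :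
    ∀ j, j ≤ n → ∀ A : Finset ℕ, A ⊆ Finset.Icc 1 j →
      ∑ s ∈ A, γ s ≤ ∑ i ∈ Finset.Ioc 0 A.card, m i j := by
  intro j
  induction j with
  | zero =>
    intro _ A hA
    have : A = ∅ := by
      rw [← Finset.subset_empty]
      intro s hs
      have := hA hs
      simp [Finset.mem_Icc] at this
    subst this
    simp
  | succ j ih =>
    intro hjn A hA
    by_cases hmem : j + 1 ∈ A
    · set A' := A.erase (j + 1) with hA'
      have hA'sub : A' ⊆ Finset.Icc 1 j := by
        intro s hs
        rw [hA', Finset.mem_erase] at hs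
        have := hA hs.2
        rw [Finset.mem_Icc] at this ⊢
        omega
      have hcard : A.card = A'.card + 1 := by
        rw [hA', Finset.card_erase_of_mem hmem]
        have : 1 ≤ A.card := Finset.card_pos.2 ⟨j + 1, hmem⟩
        omega
      have hsum : ∑ s ∈ A, γ s = (∑ s ∈ A', γ s) + γ (j + 1) := by
        rw [hA', Finset.sum_erase_add A _ hmem]
      have h1 := ih (by omega) A' hA'sub
      have hcardle : A'.card ≤ j := by
        have := Finset.card_le_card hA'sub
        rw [Nat.card_Icc] at this
        omega
      have h2 := m_step n γ m hinter A'.card j hcardle hjn (hw j hjn)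
      rw [hsum, hcard]
      omega
    · have hAsub : A ⊆ Finset.Icc 1 j := by
        intro s hs
        have h1 := hA hs
        rw [Finset.mem_Icc] at h1 ⊢
        have : s ≠ j + 1 := fun hE => hmem (hE ▸ hs)
        omega
      have h1 := ih (by omega) A hAsub
      have hcardle : A.card ≤ j := by
        have := Finset.card_le_card hAsub
        rw [Nat.card_Icc] at this
        omega
      have h2 : ∑ i ∈ Finset.Ioc 0 A.card, m i j ≤ ∑ i ∈ Finset.Ioc 0 A.card, m i (j + 1) := by
        apply Finset.sum_le_sum
        intro i hi
        rw [Finset.mem_Ioc] at hi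
        exact (hinter i j (by omega) (by omega) hjn).1
      omega

lemma claim_high (n : ℕ) (γ : ℕ → ℤ) (m : ℕ → ℕ → ℤ)
    (hinter : ∀ i j : ℕ, 1 ≤ i → i ≤ j → j + 1 ≤ n →
      m i j ≤ m i (j + 1) ∧ m (i + 1) (j + 1) ≤ m i j)
    (hw : ∀ j, j + 1 ≤ n →
      (∑ i ∈ Finset.Ioc 0 (j + 1), m i (j + 1)) - (∑ i ∈ Finset.Ioc 0 j, m i j) = γ (j + 1)) :
    ∀ d j t, n ≤ j + d → j ≤ n → t ≤ j → ∀ A : Finset ℕ, A ⊆ Finset.Ioc j n →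
      (∑ i ∈ Finset.Ioc 0 t, m i j) + ∑ s ∈ A, γ s ≤ ∑ i ∈ Finset.Ioc 0 (t + A.card), m i n := by
  intro d
  induction d with
  | zero =>
    intro j t hnd hjn htj A hA
    have hjeq : j = n := by omega
    subst hjeq
    have : A = ∅ := by
      rw [← Finset.subset_empty]
      intro s hs
      have := hA hs
      simp [Finset.mem_Ioc] at this
    subst this
    simp
  | succ d ih =>
    intro j t hnd hjn htj A hA
    by_cases hcase : n ≤ j + d
    · exact ih j t hcase hjn htj A hA
    · have hjlt : j + 1 ≤ n := by omega
      by_cases hmem : j + 1 ∈ A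
      · set A' := A.erase (j + 1) with hA'
        have hA'sub : A' ⊆ Finset.Ioc (j + 1) n := by
          intro s hs
          rw [hA', Finset.mem_erase] at hs
          have := hA hs.2
          rw [Finset.mem_Ioc] at this ⊢
          have := hs.1
          omega
        have hcard : A.card = A'.card + 1 := by
          rw [hA', Finset.card_erase_of_mem hmem]
          have : 1 ≤ A.card := Finset.card_pos.2 ⟨j + 1, hmem⟩
          omega
        have hsum : ∑ s ∈ A, γ s = (∑ s ∈ A', γ s) + γ (j + 1) := by
          rw [hA', Finset.sum_erase_add A _ hmem]
        have h2 := m_step n γ m hinter t j htj hjlt (hw j hjlt)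
        have h3 := ih (j + 1) (t + 1) (by omega) hjlt (by omega) A' hA'sub
        rw [hsum, hcard]
        have : t + (A'.card + 1) = t + 1 + A'.card := by omega
        rw [this]
        omega
      · have hAsub : A ⊆ Finset.Ioc (j + 1) n := by
          intro s hs
          have h1 := hA hs
          rw [Finset.mem_Ioc] at h1 ⊢
          have : s ≠ j + 1 := fun hE => hmem (hE ▸ hs)
          omega
        have h2 : ∑ i ∈ Finset.Ioc 0 t, m i j ≤ ∑ i ∈ Finset.Ioc 0 t, m i (j + 1) := by
          apply Finset.sum_le_sum
          intro i hi
          rw [Finset.mem_Ioc] at hi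
          exact (hinter i j (by omega) (by omega) hjlt).1
        have h3 := ih (j + 1) t (by omega) hjlt (by omega) A hAsub
        omega


lemma b_exists (n : ℕ) (γ h : ℕ → ℤ) -- h here is a curried row: we pass h i j as h2 i j
    : True := trivial

lemma h_b_exists (n : ℕ) (γ : ℕ → ℤ) (h : ℕ → ℕ → ℤ)
    (hchar : ∀ j, 1 ≤ j → j ≤ n → ∀ i, 1 ≤ i → i ≤ j → ∀ v,
      (v ≤ h i j ↔ i ≤ cnt γ j v))
    (hsum : ∀ j, 1 ≤ j → j ≤ n → ∑ i ∈ Finset.Ioc 0 j, h i j = ∑ s ∈ Finset.Ioc 0 j, γ s) :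
    ∀ j, j ≤ n → ∀ t, t ≤ j → ∃ B : Finset ℕ, B ⊆ Finset.Icc 1 j ∧ B.card = t ∧
      ∑ s ∈ B, γ s = ∑ i ∈ Finset.Ioc 0 t, h i j := by
  intro j
  induction j with
  | zero =>
    intro _ t ht
    have : t = 0 := by omega
    subst this
    exact ⟨∅, by simp, by simp, by simp⟩
  | succ j ih =>
    intro hjn t ht
    rcases Nat.eq_or_lt_of_le ht with hE | hL
    · -- t = j + 1 : take the whole interval
      refine ⟨Finset.Icc 1 (j + 1), le_refl _, by rw [Nat.card_Icc]; omega, ?_⟩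
      rw [hE, ← Finset.Icc_add_one_left_eq_Ioc]
      have := hsum (j + 1) (by omega) hjn
      rw [← Finset.Icc_add_one_left_eq_Ioc] at this
      exact this.symm
    · have htj : t ≤ j := by omega
      have hf : ∀ i, 1 ≤ i → i ≤ j → ∀ v, (v ≤ h i j ↔ i ≤ cnt γ j v) := by
        intro i h1 h2 v
        exact hchar j (by omega) (by omega) i h1 h2 v
      have hg : ∀ i, 1 ≤ i → i ≤ j + 1 → ∀ v, (v ≤ h i (j + 1) ↔ i ≤ cnt γ (j + 1) v) := by
        intro i h1 h2 v
        exact hchar (j + 1) (by omega) hjn i h1 h2 v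
      obtain ⟨k, hk1, hkj, hclause1, hclause2⟩ :=
        key_sums γ (fun i => h i j) (fun i => h i (j + 1)) j hf hg
      by_cases hcase : t < k
      · obtain ⟨B, hB1, hB2, hB3⟩ := ih (by omega) t htj
        refine ⟨B, hB1.trans (Finset.Icc_subset_Icc_right (by omega)), hB2, ?_⟩
        rw [hclause1 t hcase]
        exact hB3
      · -- k ≤ t, so t ≥ 1
        obtain ⟨t', rfl⟩ : ∃ t', t = t' + 1 := ⟨t - 1, by omega⟩
        obtain ⟨B', hB1, hB2, hB3⟩ := ih (by omega) t' (by omega)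
        have hnotmem : j + 1 ∉ B' := by
          intro hmem
          have := hB1 hmem
          rw [Finset.mem_Icc] at this
          omega
        refine ⟨insert (j + 1) B', ?_, ?_, ?_⟩
        · intro s hs
          rw [Finset.mem_insert] at hs
          rcases hs with rfl | hs
          · rw [Finset.mem_Icc]; omega
          · exact (hB1.trans (Finset.Icc_subset_Icc_right (by omega))) hs
        · rw [Finset.card_insert_of_notMem hnotmem, hB2]
        · rw [Finset.sum_insert hnotmem, hclause2 t' (by omega) (by omega), hB3]
          ring

lemma h_a_exists (n : ℕ) (γ : ℕ → ℤ) (h : ℕ → ℕ → ℤ)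
    (hchar : ∀ j, 1 ≤ j → j ≤ n → ∀ i, 1 ≤ i → i ≤ j → ∀ v,
      (v ≤ h i j ↔ i ≤ cnt γ j v)) :
    ∀ d j t, n ≤ j + d → j ≤ n → t ≤ j → ∃ A : Finset ℕ, A ⊆ Finset.Ioc j n ∧
      (∑ i ∈ Finset.Ioc 0 t, h i j) + ∑ s ∈ A, γ s
        = ∑ i ∈ Finset.Ioc 0 (t + A.card), h i n := by
  intro d
  induction d with
  | zero =>
    intro j t hnd hjn htj
    have : j = n := by omega
    subst this
    exact ⟨∅, by simp, by simp⟩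
  | succ d ih =>
    intro j t hnd hjn htj
    by_cases hcase : n ≤ j + d
    · exact ih j t hcase hjn htj
    · have hjlt : j + 1 ≤ n := by omega
      have hf : ∀ i, 1 ≤ i → i ≤ j → ∀ v, (v ≤ h i j ↔ i ≤ cnt γ j v) := by
        intro i h1 h2 v
        exact hchar j (by omega) (by omega) i h1 h2 v
      have hg : ∀ i, 1 ≤ i → i ≤ j + 1 → ∀ v, (v ≤ h i (j + 1) ↔ i ≤ cnt γ (j + 1) v) := by
        intro i h1 h2 v
        exact hchar (j + 1) (by omega) hjlt i h1 h2 v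
      obtain ⟨k, hk1, hkj, hclause1, hclause2⟩ :=
        key_sums γ (fun i => h i j) (fun i => h i (j + 1)) j hf hg
      by_cases hc : t < k
      · obtain ⟨A, hA1, hA2⟩ := ih (j + 1) t (by omega) hjlt (by omega)
        refine ⟨A, ?_, ?_⟩
        · intro s hs
          have := hA1 hs
          rw [Finset.mem_Ioc] at this ⊢
          omega
        · rw [← hclause1 t hc]
          exact hA2
      · obtain ⟨A', hA1, hA2⟩ := ih (j + 1) (t + 1) (by omega) hjlt (by omega)
        have hnotmem : j + 1 ∉ A' := by
          intro hmem
          have := hA1 hmem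
          rw [Finset.mem_Ioc] at this
          omega
        refine ⟨insert (j + 1) A', ?_, ?_⟩
        · intro s hs
          rw [Finset.mem_insert] at hs
          rcases hs with rfl | hs
          · rw [Finset.mem_Ioc]; omega
          · have := hA1 hs
            rw [Finset.mem_Ioc] at this ⊢
            omega
        · rw [Finset.sum_insert hnotmem, Finset.card_insert_of_notMem hnotmem]
          have hstep := hclause2 t htj (by omega)
          have harr : t + (A'.card + 1) = t + 1 + A'.card := by omega
          rw [harr, ← hA2, hstep]
          ring

end GTaux

/-- If `γ = σλ` is an extremal weight (i.e. `γ` is a rearrangement of the dominant `λ`),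
and `h = H(γ)` is the triangular array whose `j`-th row is the decreasing rearrangement of
`(γ_1, …, γ_j)`, then `H(γ)` is a Gel'fand–Tsetlin pattern of type `λ`, its weight is `γ`,
and it is the unique Gel'fand–Tsetlin pattern of type `λ` with weight `γ`. -/
theorem statement2 (n : ℕ) (hn : 1 ≤ n) (lam γ : ℕ → ℤ) (hdom : IsDominant n lam)
    (hperm : (Finset.Icc 1 n).val.map γ = (Finset.Icc 1 n).val.map lam)
    (h : ℕ → ℕ → ℤ)
    (hrow : ∀ j : ℕ, 1 ≤ j → j ≤ n →
      ((Finset.Icc 1 j).val.map (fun i => h i j) = (Finset.Icc 1 j).val.map γ) ∧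
      ∀ i : ℕ, 1 ≤ i → i < j → h (i + 1) j ≤ h i j) :
    IsGTPattern n lam h ∧
    (∀ j : ℕ, 1 ≤ j → j ≤ n → gtWeight h j = γ j) ∧
    (∀ m : ℕ → ℕ → ℤ, IsGTPattern n lam m →
      (∀ j : ℕ, 1 ≤ j → j ≤ n → gtWeight m j = γ j) →
      ∀ i j : ℕ, 1 ≤ i → i ≤ j → j ≤ n → m i j = h i j) := by
  classical
  open Finset GTaux in
  -- convert Icc 1 x to Ioc 0 x
  have hIO : ∀ x : ℕ, Finset.Icc 1 x = Finset.Ioc 0 x := fun x => Finset.Icc_add_one_left_eq_Ioc 0 x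
  -- counting characterization of the rows of h
  have hchar : ∀ j, 1 ≤ j → j ≤ n → ∀ i, 1 ≤ i → i ≤ j → ∀ v : ℤ,
      (v ≤ h i j ↔ i ≤ cnt γ j v) := by
    intro j hj1 hjn
    exact row_char γ (fun i => h i j) j (hrow j hj1 hjn).1 (hrow j hj1 hjn).2
  have lamchar : ∀ i, 1 ≤ i → i ≤ n → ∀ v : ℤ, (v ≤ lam i ↔ i ≤ cnt γ n v) :=
    row_char γ lam n hperm.symm hdom
  -- top row of h equals lam
  have htop : ∀ i, 1 ≤ i → i ≤ n → h i n = lam i := by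
    intro i hi1 hin
    apply le_antisymm
    · exact (lamchar i hi1 hin (h i n)).2 ((hchar n hn (le_refl n) i hi1 hin (h i n)).1 (le_refl _))
    · exact (hchar n hn (le_refl n) i hi1 hin (lam i)).2 ((lamchar i hi1 hin (lam i)).1 (le_refl _))
  -- interlacing for h
  have hinterh : ∀ i j : ℕ, 1 ≤ i → i ≤ j → j + 1 ≤ n →
      h i j ≤ h i (j + 1) ∧ h (i + 1) (j + 1) ≤ h i j := by
    intro i j hi1 hij hjn
    have hj1 : 1 ≤ j := le_trans hi1 hij
    have hs := cnt_succ γ j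
    constructor
    · apply (hchar (j + 1) (by omega) hjn i hi1 (by omega) (h i j)).2
      have h1 : i ≤ cnt γ j (h i j) := (hchar j hj1 (by omega) i hi1 hij (h i j)).1 (le_refl _)
      have h2 := hs (h i j)
      by_cases hv : h i j ≤ γ (j + 1) <;> simp [hv] at h2 <;> omega
    · apply (hchar j hj1 (by omega) i hi1 hij (h (i + 1) (j + 1))).2
      have h1 : i + 1 ≤ cnt γ (j + 1) (h (i + 1) (j + 1)) :=
        (hchar (j + 1) (by omega) hjn (i + 1) (by omega) (by omega) _).1 (le_refl _)
      have h2 := hs (h (i + 1) (j + 1))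
      by_cases hv : h (i + 1) (j + 1) ≤ γ (j + 1) <;> simp [hv] at h2 <;> omega
  have hGTh : IsGTPattern n lam h := ⟨htop, hinterh⟩
  -- row sums of h
  have hsum0 : ∀ r, r ≤ n → ∑ i ∈ Finset.Icc 1 r, h i r = ∑ s ∈ Finset.Icc 1 r, γ s := by
    intro r hrn
    rcases Nat.eq_zero_or_pos r with rfl | hr1
    · simp
    · rw [Finset.sum_eq_multiset_sum, Finset.sum_eq_multiset_sum, (hrow r hr1 hrn).1]
  -- weights of h
  have hwh : ∀ j : ℕ, 1 ≤ j → j ≤ n → gtWeight h j = γ j := by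
    intro j hj1 hjn
    obtain ⟨j, rfl⟩ : ∃ j0, j = j0 + 1 := ⟨j - 1, by omega⟩
    unfold gtWeight
    rw [Nat.add_sub_cancel, hsum0 (j + 1) hjn, hsum0 j (by omega), hIO, hIO,
      Finset.sum_Ioc_succ_top (Nat.zero_le j)]
    ring
  refine ⟨hGTh, hwh, ?_⟩
  -- uniqueness
  intro m hGT hwm i j hi1 hij hjn
  have hinter := hGT.2
  have hwIoc : ∀ j, j + 1 ≤ n →
      (∑ i ∈ Finset.Ioc 0 (j + 1), m i (j + 1)) - (∑ i ∈ Finset.Ioc 0 j, m i j) = γ (j + 1) := by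
    intro j hjn
    have := hwm (j + 1) (by omega) hjn
    unfold gtWeight at this
    rw [Nat.add_sub_cancel, hIO, hIO] at this
    exact this
  have hsumIoc : ∀ r, 1 ≤ r → r ≤ n →
      ∑ i ∈ Finset.Ioc 0 r, h i r = ∑ s ∈ Finset.Ioc 0 r, γ s := by
    intro r h1 h2
    have := hsum0 r h2
    rw [hIO] at this
    exact this
  -- partial sums agree
  have hTeq : ∀ t j, t ≤ j → j ≤ n → ∑ i ∈ Finset.Ioc 0 t, m i j = ∑ i ∈ Finset.Ioc 0 t, h i j := by
    intro t j htj hjn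
    obtain ⟨B, hB1, hB2, hB3⟩ := h_b_exists n γ h hchar hsumIoc j hjn t htj
    have hlow := claim_low n γ m hinter hwIoc j hjn B hB1
    rw [hB2] at hlow
    obtain ⟨A, hA1, hA2⟩ := h_a_exists n γ h hchar n j t (by omega) hjn htj
    have hhigh := claim_high n γ m hinter hwIoc n j t (by omega) hjn htj A hA1
    have hcardA : t + A.card ≤ n := by
      have := Finset.card_le_card hA1
      rw [Nat.card_Ioc] at this
      omega
    have htopeq : ∑ i ∈ Finset.Ioc 0 (t + A.card), m i n
        = ∑ i ∈ Finset.Ioc 0 (t + A.card), h i n := by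
      apply Finset.sum_congr rfl
      intro i hi
      rw [Finset.mem_Ioc] at hi
      rw [hGT.1 i (by omega) (by omega), htop i (by omega) (by omega)]
    rw [htopeq, ← hA2] at hhigh
    omega
  -- conclude entrywise
  obtain ⟨i, rfl⟩ : ∃ i0, i = i0 + 1 := ⟨i - 1, by omega⟩
  have e1 := hTeq (i + 1) j hij hjn
  have e2 := hTeq i j (by omega) hjn
  rw [Finset.sum_Ioc_succ_top (Nat.zero_le i), Finset.sum_Ioc_succ_top (Nat.zero_le i)] at e1
  omega
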